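/- Let r ≥ 3 and n ≥ 2, and define m_d for d ≥ 1 by the formal power series identity ∏_{i odd} (1+t^i)^{m_i} / ∏_{i even} (1−t^i)^{m_i} = 1/(1 − r t^{n−1} + t^{2n−2}). Then m_{d} = 0 unless (n−1) | d, there are polynomials p_j in r with p_j(r) = m_{j(n−1)} and leading term r^j/j, and lim_{j→∞} p_j(r)^{1/j} = (r + √(r²−4))/2 > 1. In particular the m_d are not eventually zero. -/

import Mathlib

noncomputable section
open PowerSeries Filter

def luc {K : Type*} [CommRing K] (x : K) : ℕ → K
  | 0 => 2
  | 1 => x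
  | (j+2) => x * luc x (j+1) - luc x j

theorem luc_map {K L : Type*} [CommRing K] [CommRing L] (f : K →+* L) (x : K) :
    ∀ j, f (luc x j) = luc (f x) j := by
  intro j
  induction j using Nat.twoStepInduction with
  | zero => show f 2 = 2; rw [map_ofNat]
  | one => simp [luc]
  | more j ih1 ih2 => show f (x * luc x (j+1) - luc x j) = _; simp [luc, ih1, ih2]

theorem luc_eq_roots {K : Type*} [CommRing K] {x α β : K} (hs : α + β = x) (hp : α * β = 1) :
    ∀ j, luc x j = α ^ j + β ^ j := by
  intro j
  induction j using Nat.twoStepInduction with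
  | zero => show (2 : K) = _; ring
  | one => simp [luc, hs]
  | more j ih1 ih2 =>
    show x * luc x (j+1) - luc x j = _
    rw [ih1, ih2, ← hs]
    linear_combination (α ^ j + β ^ j) * hp

theorem luc_rec {K : Type*} [CommRing K] (x : K) (j : ℕ) :
    luc x (j+2) = x * luc x (j+1) - luc x j := rfl

theorem luc_natDegree_le : ∀ j : ℕ, (luc (Polynomial.X : Polynomial ℚ) j).natDegree ≤ j := by
  intro j
  induction j using Nat.twoStepInduction with
  | zero => show (2 : Polynomial ℚ).natDegree ≤ 0; simp
  | one => simp [luc]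
  | more j ih1 ih2 =>
    rw [luc_rec]
    refine le_trans (Polynomial.natDegree_sub_le _ _) ?_
    simp only [max_le_iff]
    constructor
    · refine le_trans (Polynomial.natDegree_mul_le) ?_
      simp only [Polynomial.natDegree_X]; omega
    · omega

theorem luc_poly_monic : ∀ j : ℕ, 1 ≤ j →
    (luc (Polynomial.X : Polynomial ℚ) j).Monic ∧
      (luc (Polynomial.X : Polynomial ℚ) j).natDegree = j := by
  intro j
  induction j using Nat.twoStepInduction with
  | zero => omega
  | one => intro _; exact ⟨by simpa [luc] using Polynomial.monic_X,
      by simp [luc, Polynomial.natDegree_X]⟩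
  | more j ih1 ih2 =>
    intro _
    obtain ⟨hm, hd⟩ := ih2 (by omega)
    have hXm : (Polynomial.X * luc (Polynomial.X : Polynomial ℚ) (j+1)).Monic :=
      Polynomial.monic_X.mul hm
    have hXd : (Polynomial.X * luc (Polynomial.X : Polynomial ℚ) (j+1)).natDegree = j + 2 := by
      rw [Polynomial.monic_X.natDegree_mul hm, Polynomial.natDegree_X, hd]
      omega
    have hlt : (luc (Polynomial.X : Polynomial ℚ) j).degree <
        (Polynomial.X * luc (Polynomial.X : Polynomial ℚ) (j+1)).degree := by
      calc (luc (Polynomial.X : Polynomial ℚ) j).degree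
          ≤ ((luc (Polynomial.X : Polynomial ℚ) j).natDegree : WithBot ℕ) :=
            Polynomial.degree_le_natDegree
        _ < ((j + 2 : ℕ) : WithBot ℕ) := by
            exact_mod_cast Nat.lt_of_le_of_lt (luc_natDegree_le j) (by omega)
        _ = _ := by rw [Polynomial.degree_eq_natDegree hXm.ne_zero, hXd]
    rw [luc_rec]
    refine ⟨hXm.sub_of_left hlt, ?_⟩
    rw [Polynomial.natDegree_eq_of_degree_eq (Polynomial.degree_sub_eq_left_of_degree_lt hlt), hXd]

def Jser (i : ℕ) : ℚ⟦X⟧ := PowerSeries.mk fun d => if i ∣ d then (-1 : ℚ) ^ (d / i) else 0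

def Kser (i : ℕ) : ℚ⟦X⟧ := PowerSeries.mk fun d => if i ∣ d then (1 : ℚ) else 0

theorem Jser_mul (i : ℕ) (hi : 1 ≤ i) : (1 + X ^ i) * Jser i = 1 := by
  ext d
  rw [add_mul, one_mul, map_add, PowerSeries.coeff_X_pow_mul', PowerSeries.coeff_one]
  simp only [Jser, PowerSeries.coeff_mk]
  by_cases hle : i ≤ d
  · rw [if_pos hle, if_neg (by omega : ¬ d = 0)]
    by_cases hdvd : i ∣ d
    · have h2 : i ∣ d - i := Nat.dvd_sub hdvd dvd_rfl
      rw [if_pos hdvd, if_pos h2]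
      have h1 : 1 ≤ d / i := (Nat.one_le_div_iff (by omega)).mpr hle
      have hq : d / i = (d - i) / i + 1 := by
        conv_lhs => rw [show d = (d - i) + i by omega]
        rw [Nat.add_div_right _ (by omega)]
      rw [hq, pow_succ]
      ring
    · rw [if_neg hdvd, if_neg (fun h => hdvd (by
        have : d = (d - i) + i := by omega
        rw [this]; exact Nat.dvd_add h dvd_rfl)), add_zero]
  · rw [if_neg hle]
    rcases Nat.eq_zero_or_pos d with rfl | hd
    · rw [if_pos (dvd_zero i), if_pos rfl]
      simp
    · rw [if_neg (fun hdvd => hle (Nat.le_of_dvd hd hdvd)), if_neg (by omega), add_zero]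

theorem Kser_mul (i : ℕ) (hi : 1 ≤ i) : (1 - X ^ i) * Kser i = 1 := by
  ext d
  rw [sub_mul, one_mul, map_sub, PowerSeries.coeff_X_pow_mul', PowerSeries.coeff_one]
  simp only [Kser, PowerSeries.coeff_mk]
  by_cases hle : i ≤ d
  · rw [if_pos hle, if_neg (by omega : ¬ d = 0)]
    by_cases hdvd : i ∣ d
    · have h2 : i ∣ d - i := Nat.dvd_sub hdvd dvd_rfl
      rw [if_pos hdvd, if_pos h2]; ring
    · rw [if_neg hdvd, if_neg (fun h => hdvd (by
        have : d = (d - i) + i := by omega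
        rw [this]; exact Nat.dvd_add h dvd_rfl)), sub_zero]
  · rw [if_neg hle]
    rcases Nat.eq_zero_or_pos d with rfl | hd
    · rw [if_pos (dvd_zero i), if_pos rfl]
      simp
    · rw [if_neg (fun hdvd => hle (Nat.le_of_dvd hd hdvd)), if_neg (by omega), sub_zero]
def Gser (r q : ℕ) : ℚ⟦X⟧ := 1 - PowerSeries.C (r : ℚ) * X ^ q + X ^ (2 * q)

def Sig (r q : ℕ) : ℚ⟦X⟧ :=
  PowerSeries.mk fun d => if q ∣ (d + 1) then luc (r : ℚ) ((d + 1) / q) else 0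

theorem Gser_mul_Sig (r q : ℕ) (hq : 1 ≤ q) :
    Gser r q * Sig r q =
      PowerSeries.C (r : ℚ) * X ^ (q - 1) - PowerSeries.C 2 * X ^ (2 * q - 1) := by
  ext d
  rw [Gser, add_mul, sub_mul, one_mul, mul_assoc, map_add, map_sub, map_sub,
    PowerSeries.coeff_C_mul, PowerSeries.coeff_C_mul, PowerSeries.coeff_C_mul,
    PowerSeries.coeff_X_pow_mul', PowerSeries.coeff_X_pow_mul',
    PowerSeries.coeff_X_pow, PowerSeries.coeff_X_pow]
  simp only [Sig, PowerSeries.coeff_mk]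
  by_cases hdvd : q ∣ (d + 1)
  · obtain ⟨j, hj⟩ := hdvd
    rcases Nat.eq_zero_or_pos j with rfl | hj1
    · omega
    have hj' : d + 1 = j * q := by rw [hj, Nat.mul_comm]
    have hdj : (d + 1) / q = j := by rw [hj, Nat.mul_div_cancel_left _ (by omega)]
    rw [if_pos ⟨j, hj⟩, hdj]
    rcases Nat.lt_or_ge j 2 with hj2 | hj2
    · -- j = 1 : d = q - 1
      have hj'' : j = 1 := by omega
      subst hj''
      rw [if_neg (by omega : ¬ q ≤ d), if_neg (by omega : ¬ 2 * q ≤ d),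
        if_pos (by omega : d = q - 1), if_neg (by omega : ¬ d = 2 * q - 1)]
      show luc (r:ℚ) 1 - (r:ℚ) * 0 + 0 = (r:ℚ) * 1 - 2 * 0
      show (r:ℚ) - (r:ℚ) * 0 + 0 = (r:ℚ) * 1 - 2 * 0
      ring
    rcases Nat.lt_or_ge j 3 with hj3 | hj3
    · -- j = 2 : d = 2q - 1
      have hj'' : j = 2 := by omega
      subst hj''
      have hdq : d - q + 1 = q := by omega
      rw [if_pos (by omega : q ≤ d), if_neg (by omega : ¬ 2 * q ≤ d), hdq,
        if_pos (dvd_refl q), Nat.div_self (by omega),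
        if_neg (by omega : ¬ d = q - 1), if_pos (by omega : d = 2 * q - 1)]
      have h2 : luc (r:ℚ) 2 = (r:ℚ) * luc (r:ℚ) 1 - luc (r:ℚ) 0 := luc_rec _ 0
      rw [h2]
      show (r:ℚ) * (r:ℚ) - 2 - (r:ℚ) * (r:ℚ) + 0 = (r:ℚ) * 0 - 2 * 1
      ring
    · -- j ≥ 3
      have h3q : q * 3 ≤ q * j := Nat.mul_le_mul_left q hj3
      have hqd : q ≤ d := by omega
      have h2qd : 2 * q ≤ d := by omega
      have hdq : d - q + 1 = (j - 1) * q := by rw [Nat.sub_mul, one_mul]; omega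
      have hdq2 : d - 2 * q + 1 = (j - 2) * q := by rw [Nat.sub_mul]; omega
      rw [if_pos hqd, if_pos h2qd, hdq, hdq2,
        if_pos ⟨j - 1, Nat.mul_comm _ _⟩, if_pos ⟨j - 2, Nat.mul_comm _ _⟩,
        Nat.mul_div_cancel _ (by omega), Nat.mul_div_cancel _ (by omega),
        if_neg (by omega : ¬ d = q - 1), if_neg (by omega : ¬ d = 2 * q - 1)]
      have hrec : luc (r:ℚ) ((j-2)+2) = (r:ℚ) * luc (r:ℚ) ((j-2)+1) - luc (r:ℚ) (j-2) :=
        luc_rec _ _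
      rw [show (j-2)+2 = j by omega, show (j-2)+1 = j-1 by omega] at hrec
      rw [hrec]; ring
  · -- q does not divide d+1
    have z1 : ¬ (q ∣ d - q + 1) ∨ ¬ q ≤ d := by
      by_cases h : q ≤ d
      · exact Or.inl (fun h2 => hdvd (by
          have : d + 1 = (d - q + 1) + q := by omega
          rw [this]; exact Nat.dvd_add h2 dvd_rfl))
      · exact Or.inr h
    have z2 : ¬ (q ∣ d - 2 * q + 1) ∨ ¬ 2 * q ≤ d := by
      by_cases h : 2 * q ≤ d
      · exact Or.inl (fun h2 => hdvd (by
          have : d + 1 = (d - 2 * q + 1) + q + q := by omega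
          rw [this]; exact Nat.dvd_add (Nat.dvd_add h2 dvd_rfl) dvd_rfl))
      · exact Or.inr h
    have e1 : (if q ≤ d then (if q ∣ d - q + 1 then luc (r:ℚ) ((d - q + 1)/q) else 0) else 0)
        = 0 := by
      rcases z1 with h | h
      · split_ifs <;> simp_all
      · rw [if_neg h]
    have e2 : (if 2 * q ≤ d then
        (if q ∣ d - 2 * q + 1 then luc (r:ℚ) ((d - 2 * q + 1)/q) else 0) else 0) = 0 := by
      rcases z2 with h | h
      · split_ifs <;> simp_all
      · rw [if_neg h]
    rw [if_neg hdvd, e1, e2, if_neg (fun h : d = q - 1 => hdvd (by subst h; exact ⟨1, by omega⟩)),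
      if_neg (fun h : d = 2 * q - 1 => hdvd (by subst h; exact ⟨2, by omega⟩))]
    ring
/-- Logarithmic derivative of a power series. -/
def LD (f : ℚ⟦X⟧) : ℚ⟦X⟧ := d⁄dX ℚ f * f⁻¹

theorem LD_mul {f g : ℚ⟦X⟧} (hf : constantCoeff f ≠ 0) (hg : constantCoeff g ≠ 0) :
    LD (f * g) = LD f + LD g := by
  unfold LD
  rw [Derivation.leibniz, PowerSeries.mul_inv_rev]
  have : (f • d⁄dX ℚ g + g • d⁄dX ℚ f) * (g⁻¹ * f⁻¹)
      = (d⁄dX ℚ g * g⁻¹) * (f * f⁻¹) + (d⁄dX ℚ f * f⁻¹) * (g * g⁻¹) := by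
    simp only [smul_eq_mul]; ring
  rw [this, PowerSeries.mul_inv_cancel _ hf, PowerSeries.mul_inv_cancel _ hg, mul_one, mul_one,
    add_comm]

theorem LD_pow {f : ℚ⟦X⟧} (hf : constantCoeff f ≠ 0) (k : ℕ) :
    LD (f ^ k) = (k : ℚ⟦X⟧) * LD f := by
  induction k with
  | zero => simp [LD]
  | succ k ih =>
    rw [pow_succ, LD_mul (by rw [map_pow]; exact pow_ne_zero _ hf) hf, ih]
    push_cast
    ring

theorem LD_prod {ι : Type*} (s : Finset ι) (f : ι → ℚ⟦X⟧)
    (h : ∀ i ∈ s, constantCoeff (f i) ≠ 0) :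
    LD (∏ i ∈ s, f i) = ∑ i ∈ s, LD (f i) := by
  classical
  induction s using Finset.induction_on with
  | empty => simp [LD]
  | insert a s hx ih =>
    rw [Finset.prod_insert hx, Finset.sum_insert hx,
      LD_mul (h a (Finset.mem_insert_self a s)) (by
        rw [map_prod]
        exact Finset.prod_ne_zero_iff.mpr fun i hi => h i (Finset.mem_insert_of_mem hi)),
      ih (fun i hi => h i (Finset.mem_insert_of_mem hi))]

theorem X_pow_dvd_prod_sub_one {ι : Type*} (s : Finset ι) (f : ι → ℚ⟦X⟧) (k : ℕ)
    (h : ∀ i ∈ s, (X : ℚ⟦X⟧) ^ k ∣ f i - 1) :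
    (X : ℚ⟦X⟧) ^ k ∣ (∏ i ∈ s, f i) - 1 := by
  classical
  induction s using Finset.induction_on with
  | empty => simp
  | insert a s hx ih =>
    rw [Finset.prod_insert hx]
    have : f a * ∏ i ∈ s, f i - 1 = f a * ((∏ i ∈ s, f i) - 1) + (f a - 1) := by ring
    rw [this]
    exact dvd_add (Dvd.dvd.mul_left (ih fun i hi => h i (Finset.mem_insert_of_mem hi)) _)
      (h a (Finset.mem_insert_self a s))

theorem coeff_eq_of_X_pow_dvd {f g : ℚ⟦X⟧} {k : ℕ} (h : (X : ℚ⟦X⟧) ^ k ∣ f - g)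
    {d : ℕ} (hd : d < k) : PowerSeries.coeff d f = PowerSeries.coeff d g := by
  have := (PowerSeries.X_pow_dvd_iff.mp h) d hd
  rw [map_sub, sub_eq_zero] at this
  exact this

def Aprod (m : ℕ → ℕ) (N : ℕ) : ℚ⟦X⟧ :=
  ∏ i ∈ (Finset.Icc 1 N).filter (fun i => Odd i), (1 + X ^ i) ^ (m i)

def Bprod (m : ℕ → ℕ) (N : ℕ) : ℚ⟦X⟧ :=
  ∏ i ∈ (Finset.Icc 1 N).filter (fun i => Even i), (1 - X ^ i) ^ (m i)

theorem X_pow_dvd_pm_one_pow (i k e : ℕ) (hik : k ≤ i) (c : ℚ) :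
    (X : ℚ⟦X⟧) ^ k ∣ (1 + PowerSeries.C c * X ^ i) ^ e - 1 := by
  have h1 : (X : ℚ⟦X⟧) ^ k ∣ (1 + PowerSeries.C c * X ^ i) - 1 := by
    simpa using Dvd.dvd.mul_left (pow_dvd_pow (X : ℚ⟦X⟧) hik) (PowerSeries.C c)
  calc (X : ℚ⟦X⟧) ^ k ∣ (1 + PowerSeries.C c * X ^ i) - 1 := h1
    _ ∣ (1 + PowerSeries.C c * X ^ i) ^ e - 1 ^ e := sub_dvd_pow_sub_pow _ _ e
    _ = (1 + PowerSeries.C c * X ^ i) ^ e - 1 := by rw [one_pow]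

theorem Aprod_congr (m : ℕ → ℕ) {d N : ℕ} (h : d ≤ N) :
    (X : ℚ⟦X⟧) ^ (d + 1) ∣ Aprod m N - Aprod m d := by
  have hsplit : (Finset.Icc 1 N).filter (fun i => Odd i)
      = ((Finset.Icc 1 d).filter (fun i => Odd i)) ∪ ((Finset.Ioc d N).filter (fun i => Odd i)) := by
    ext x; simp only [Finset.mem_filter, Finset.mem_Icc, Finset.mem_Ioc, Finset.mem_union]
    constructor
    · rintro ⟨⟨h1, h2⟩, h3⟩
      rcases le_or_gt x d with h4 | h4
      · exact Or.inl ⟨⟨h1, h4⟩, h3⟩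
      · exact Or.inr ⟨⟨h4, h2⟩, h3⟩
    · rintro (⟨⟨h1, h2⟩, h3⟩ | ⟨⟨h1, h2⟩, h3⟩)
      · exact ⟨⟨h1, le_trans h2 h⟩, h3⟩
      · exact ⟨⟨by omega, h2⟩, h3⟩
  have hdisj : Disjoint ((Finset.Icc 1 d).filter (fun i => Odd i))
      ((Finset.Ioc d N).filter (fun i => Odd i)) := by
    rw [Finset.disjoint_left]
    intro x hx hy
    simp only [Finset.mem_filter, Finset.mem_Icc, Finset.mem_Ioc] at hx hy
    omega
  rw [Aprod, Aprod, hsplit, Finset.prod_union hdisj]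
  have : (∏ i ∈ (Finset.Icc 1 d).filter (fun i => Odd i), (1 + (X:ℚ⟦X⟧) ^ i) ^ m i) *
        (∏ i ∈ (Finset.Ioc d N).filter (fun i => Odd i), (1 + (X:ℚ⟦X⟧) ^ i) ^ m i) -
      (∏ i ∈ (Finset.Icc 1 d).filter (fun i => Odd i), (1 + (X:ℚ⟦X⟧) ^ i) ^ m i)
    = (∏ i ∈ (Finset.Icc 1 d).filter (fun i => Odd i), (1 + (X:ℚ⟦X⟧) ^ i) ^ m i) *
        ((∏ i ∈ (Finset.Ioc d N).filter (fun i => Odd i), (1 + (X:ℚ⟦X⟧) ^ i) ^ m i) - 1) := by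
    ring
  rw [this]
  refine Dvd.dvd.mul_left ?_ _
  refine X_pow_dvd_prod_sub_one _ _ _ fun i hi => ?_
  simp only [Finset.mem_filter, Finset.mem_Ioc] at hi
  simpa using X_pow_dvd_pm_one_pow i (d+1) (m i) (by omega) 1

theorem Bprod_congr (m : ℕ → ℕ) {d N : ℕ} (h : d ≤ N) :
    (X : ℚ⟦X⟧) ^ (d + 1) ∣ Bprod m N - Bprod m d := by
  have hsplit : (Finset.Icc 1 N).filter (fun i => Even i)
      = ((Finset.Icc 1 d).filter (fun i => Even i)) ∪ ((Finset.Ioc d N).filter (fun i => Even i)) := by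
    ext x; simp only [Finset.mem_filter, Finset.mem_Icc, Finset.mem_Ioc, Finset.mem_union]
    constructor
    · rintro ⟨⟨h1, h2⟩, h3⟩
      rcases le_or_gt x d with h4 | h4
      · exact Or.inl ⟨⟨h1, h4⟩, h3⟩
      · exact Or.inr ⟨⟨h4, h2⟩, h3⟩
    · rintro (⟨⟨h1, h2⟩, h3⟩ | ⟨⟨h1, h2⟩, h3⟩)
      · exact ⟨⟨h1, le_trans h2 h⟩, h3⟩
      · exact ⟨⟨by omega, h2⟩, h3⟩
  have hdisj : Disjoint ((Finset.Icc 1 d).filter (fun i => Even i))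
      ((Finset.Ioc d N).filter (fun i => Even i)) := by
    rw [Finset.disjoint_left]
    intro x hx hy
    simp only [Finset.mem_filter, Finset.mem_Icc, Finset.mem_Ioc] at hx hy
    omega
  rw [Bprod, Bprod, hsplit, Finset.prod_union hdisj]
  have : (∏ i ∈ (Finset.Icc 1 d).filter (fun i => Even i), (1 - (X:ℚ⟦X⟧) ^ i) ^ m i) *
        (∏ i ∈ (Finset.Ioc d N).filter (fun i => Even i), (1 - (X:ℚ⟦X⟧) ^ i) ^ m i) -
      (∏ i ∈ (Finset.Icc 1 d).filter (fun i => Even i), (1 - (X:ℚ⟦X⟧) ^ i) ^ m i)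
    = (∏ i ∈ (Finset.Icc 1 d).filter (fun i => Even i), (1 - (X:ℚ⟦X⟧) ^ i) ^ m i) *
        ((∏ i ∈ (Finset.Ioc d N).filter (fun i => Even i), (1 - (X:ℚ⟦X⟧) ^ i) ^ m i) - 1) := by
    ring
  rw [this]
  refine Dvd.dvd.mul_left ?_ _
  refine X_pow_dvd_prod_sub_one _ _ _ fun i hi => ?_
  simp only [Finset.mem_filter, Finset.mem_Ioc] at hi
  have := X_pow_dvd_pm_one_pow i (d+1) (m i) (by omega) (-1)
  simpa [sub_eq_add_neg] using this
theorem constantCoeff_one_add_X_pow (i : ℕ) (hi : 1 ≤ i) :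
    constantCoeff (R := ℚ) (1 + X ^ i) = 1 := by
  rw [map_add, map_one, map_pow, PowerSeries.constantCoeff_X, zero_pow (by omega), add_zero]

theorem constantCoeff_one_sub_X_pow (i : ℕ) (hi : 1 ≤ i) :
    constantCoeff (R := ℚ) (1 - X ^ i) = 1 := by
  rw [map_sub, map_one, map_pow, PowerSeries.constantCoeff_X, zero_pow (by omega), sub_zero]

theorem inv_one_add_X_pow (i : ℕ) (hi : 1 ≤ i) : (1 + (X : ℚ⟦X⟧) ^ i)⁻¹ = Jser i := by
  symm
  rw [PowerSeries.eq_inv_iff_mul_eq_one (by rw [constantCoeff_one_add_X_pow i hi]; norm_num)]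
  rw [mul_comm]; exact Jser_mul i hi

theorem inv_one_sub_X_pow (i : ℕ) (hi : 1 ≤ i) : (1 - (X : ℚ⟦X⟧) ^ i)⁻¹ = Kser i := by
  symm
  rw [PowerSeries.eq_inv_iff_mul_eq_one (by rw [constantCoeff_one_sub_X_pow i hi]; norm_num)]
  rw [mul_comm]; exact Kser_mul i hi

theorem deriv_X_pow (i : ℕ) : d⁄dX ℚ ((X : ℚ⟦X⟧) ^ i) = PowerSeries.C (i : ℚ) * X ^ (i - 1) := by
  rw [Derivation.leibniz_pow, PowerSeries.derivative_X]
  simp only [smul_eq_mul, mul_one, nsmul_eq_mul]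
  rw [PowerSeries.C_eq_algebraMap]
  push_cast
  ring

theorem coeff_LD_one_add (i N : ℕ) (hi : 1 ≤ i) (hN : 1 ≤ N) :
    PowerSeries.coeff (N - 1) (LD (1 + X ^ i)) =
      if i ∣ N then (i : ℚ) * (-1) ^ (N / i + 1) else 0 := by
  rw [LD, inv_one_add_X_pow i hi, map_add, Derivation.map_one_eq_zero, zero_add, deriv_X_pow,
    mul_assoc, PowerSeries.coeff_C_mul, PowerSeries.coeff_X_pow_mul']
  by_cases hle : i ≤ N
  · rw [if_pos (by omega : i - 1 ≤ N - 1)]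
    have hsub : N - 1 - (i - 1) = N - i := by omega
    rw [hsub]
    simp only [Jser, PowerSeries.coeff_mk]
    by_cases hdvd : i ∣ N
    · have h2 : i ∣ N - i := Nat.dvd_sub hdvd dvd_rfl
      rw [if_pos h2, if_pos hdvd]
      have h1 : 1 ≤ N / i := (Nat.one_le_div_iff (by omega)).mpr hle
      have hq : N / i = (N - i) / i + 1 := by
        conv_lhs => rw [show N = (N - i) + i by omega]
        rw [Nat.add_div_right _ (by omega)]
      have : (N - i) / i = N / i - 1 := by omega
      rw [this, show N / i + 1 = (N / i - 1) + 2 by omega, pow_add]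
      norm_num
    · rw [if_neg (fun h => hdvd (by
        have : N = (N - i) + i := by omega
        rw [this]; exact Nat.dvd_add h dvd_rfl)), if_neg hdvd, mul_zero]
  · rw [if_neg (by omega : ¬ i - 1 ≤ N - 1),
      if_neg (fun hdvd => hle (Nat.le_of_dvd (by omega) hdvd)), mul_zero]

theorem coeff_LD_one_sub (i N : ℕ) (hi : 1 ≤ i) (hN : 1 ≤ N) :
    PowerSeries.coeff (N - 1) (LD (1 - X ^ i)) =
      if i ∣ N then -(i : ℚ) else 0 := by
  rw [LD, inv_one_sub_X_pow i hi, map_sub, Derivation.map_one_eq_zero, zero_sub, deriv_X_pow,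
    neg_mul, mul_assoc, map_neg, PowerSeries.coeff_C_mul, PowerSeries.coeff_X_pow_mul']
  by_cases hle : i ≤ N
  · rw [if_pos (by omega : i - 1 ≤ N - 1)]
    have hsub : N - 1 - (i - 1) = N - i := by omega
    rw [hsub]
    simp only [Kser, PowerSeries.coeff_mk]
    by_cases hdvd : i ∣ N
    · have h2 : i ∣ N - i := Nat.dvd_sub hdvd dvd_rfl
      rw [if_pos h2, if_pos hdvd, mul_one]
    · rw [if_neg (fun h => hdvd (by
        have : N = (N - i) + i := by omega
        rw [this]; exact Nat.dvd_add h dvd_rfl)), if_neg hdvd, mul_zero, neg_zero]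
  · rw [if_neg (by omega : ¬ i - 1 ≤ N - 1),
      if_neg (fun hdvd => hle (Nat.le_of_dvd (by omega) hdvd)), mul_zero, neg_zero]

theorem constantCoeff_Gser (r q : ℕ) (hq : 1 ≤ q) : constantCoeff (Gser r q) = 1 := by
  rw [Gser, map_add, map_sub, map_one, map_mul, map_pow, map_pow, PowerSeries.constantCoeff_X,
    zero_pow (by omega : q ≠ 0), zero_pow (by omega : 2 * q ≠ 0)]
  simp

theorem LD_Gser (r q : ℕ) (hq : 1 ≤ q) :
    LD (Gser r q) = -(PowerSeries.C (q : ℚ)) * Sig r q := by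
  have hder : d⁄dX ℚ (Gser r q) = -(PowerSeries.C (q : ℚ)) * (Gser r q * Sig r q) := by
    rw [Gser_mul_Sig r q hq, Gser]
    rw [map_add, map_sub, Derivation.map_one_eq_zero, Derivation.leibniz, deriv_X_pow, deriv_X_pow,
      PowerSeries.derivative_C]
    rw [show 2 * q - 1 = (q - 1) + q by omega, pow_add]
    have h2q : PowerSeries.C ((2 * q : ℕ) : ℚ) = PowerSeries.C 2 * PowerSeries.C (q : ℚ) := by
      rw [← map_mul]; norm_num
    rw [h2q]
    simp only [smul_eq_mul]
    ring
  rw [LD, hder]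
  have : -(PowerSeries.C (q:ℚ)) * (Gser r q * Sig r q) * (Gser r q)⁻¹
      = -(PowerSeries.C (q:ℚ)) * Sig r q * (Gser r q * (Gser r q)⁻¹) := by ring
  rw [this, PowerSeries.mul_inv_cancel _ (by rw [constantCoeff_Gser r q hq]; norm_num), mul_one]
theorem constantCoeff_Aprod (m : ℕ → ℕ) (N : ℕ) : constantCoeff (Aprod m N) = 1 := by
  rw [Aprod, map_prod]
  refine Finset.prod_eq_one fun i hi => ?_
  simp only [Finset.mem_filter, Finset.mem_Icc] at hi
  rw [map_pow, constantCoeff_one_add_X_pow i hi.1.1, one_pow]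

theorem constantCoeff_Bprod (m : ℕ → ℕ) (N : ℕ) : constantCoeff (Bprod m N) = 1 := by
  rw [Bprod, map_prod]
  refine Finset.prod_eq_one fun i hi => ?_
  simp only [Finset.mem_filter, Finset.mem_Icc] at hi
  rw [map_pow, constantCoeff_one_sub_X_pow i hi.1.1, one_pow]

theorem master (r q : ℕ) (hq : 1 ≤ q) (m : ℕ → ℕ)
    (H : ∀ d : ℕ, PowerSeries.coeff d (Gser r q * Aprod m d)
        = PowerSeries.coeff d (Bprod m d))
    (N : ℕ) (hN : 1 ≤ N) :
    ∑ i ∈ N.divisors, (if Odd i then (-1 : ℚ) ^ (N / i + 1) else 1) * i * (m i)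
      = if q ∣ N then (q : ℚ) * luc (r : ℚ) (N / q) else 0 := by
  classical
  set G := Gser r q with hG
  set P := G * Aprod m N with hP
  set Q := Bprod m N with hQ
  -- coefficients agree up to degree N
  have h1 : ∀ d, d ≤ N → PowerSeries.coeff d P = PowerSeries.coeff d Q := by
    intro d hd
    have e1 : PowerSeries.coeff d P = PowerSeries.coeff d (G * Aprod m d) := by
      refine coeff_eq_of_X_pow_dvd ?_ (Nat.lt_succ_self d)
      rw [hP, ← mul_sub]
      exact Dvd.dvd.mul_left (Aprod_congr m hd) G
    have e2 : PowerSeries.coeff d Q = PowerSeries.coeff d (Bprod m d) := by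
      refine coeff_eq_of_X_pow_dvd ?_ (Nat.lt_succ_self d)
      exact Bprod_congr m hd
    rw [e1, e2, H d]
  have h2 : (X : ℚ⟦X⟧) ^ (N + 1) ∣ P - Q := by
    rw [PowerSeries.X_pow_dvd_iff]
    intro d hd
    rw [map_sub, h1 d (by omega), sub_self]
  -- derivative congruence
  have h3 : (X : ℚ⟦X⟧) ^ N ∣ d⁄dX ℚ P - d⁄dX ℚ Q := by
    obtain ⟨h, hh⟩ := h2
    have : d⁄dX ℚ P - d⁄dX ℚ Q = d⁄dX ℚ (P - Q) := (map_sub _ _ _).symm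
    rw [this, hh, Derivation.leibniz, deriv_X_pow]
    refine dvd_add ?_ ?_
    · rw [smul_eq_mul]
      exact Dvd.dvd.mul_right (pow_dvd_pow _ (Nat.le_succ N)) _
    · rw [smul_eq_mul, show N + 1 - 1 = N from rfl]
      exact Dvd.dvd.mul_left (Dvd.dvd.mul_left dvd_rfl _) _
  have h4 : (X : ℚ⟦X⟧) ^ N ∣ d⁄dX ℚ P * Q - d⁄dX ℚ Q * P := by
    have e : d⁄dX ℚ P * Q - d⁄dX ℚ Q * P
        = (d⁄dX ℚ P - d⁄dX ℚ Q) * Q + d⁄dX ℚ Q * (Q - P) := by ring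
    rw [e]
    refine dvd_add (Dvd.dvd.mul_right h3 Q) ?_
    have : (X : ℚ⟦X⟧) ^ N ∣ Q - P := by
      have := (dvd_neg.mpr h2)
      rw [neg_sub] at this
      exact dvd_trans (pow_dvd_pow _ (by omega)) this
    exact Dvd.dvd.mul_left this _
  have hccP : constantCoeff P ≠ 0 := by
    rw [hP, map_mul, hG, constantCoeff_Gser r q hq, constantCoeff_Aprod]; norm_num
  have hccQ : constantCoeff Q ≠ 0 := by
    rw [hQ, constantCoeff_Bprod]; norm_num
  have h6 : (X : ℚ⟦X⟧) ^ N ∣ LD P - LD Q := by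
    have e : LD P - LD Q = (d⁄dX ℚ P * Q - d⁄dX ℚ Q * P) * (P⁻¹ * Q⁻¹) := by
      have e2 : (d⁄dX ℚ P * Q - d⁄dX ℚ Q * P) * (P⁻¹ * Q⁻¹)
          = (d⁄dX ℚ P * P⁻¹) * (Q * Q⁻¹) - (d⁄dX ℚ Q * Q⁻¹) * (P * P⁻¹) := by ring
      rw [e2, PowerSeries.mul_inv_cancel _ hccP, PowerSeries.mul_inv_cancel _ hccQ,
        mul_one, mul_one, LD, LD]
    rw [e]
    exact Dvd.dvd.mul_right h4 _
  have h7 : PowerSeries.coeff (N - 1) (LD P) = PowerSeries.coeff (N - 1) (LD Q) := by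
    refine coeff_eq_of_X_pow_dvd h6 ?_
    omega
  -- expand LD P and LD Q
  have hA : LD (Aprod m N) = ∑ i ∈ (Finset.Icc 1 N).filter (fun i => Odd i),
      (PowerSeries.C (m i : ℚ)) * LD (1 + X ^ i) := by
    rw [Aprod, LD_prod _ _ (fun i hi => by
      simp only [Finset.mem_filter, Finset.mem_Icc] at hi
      rw [map_pow, constantCoeff_one_add_X_pow i hi.1.1, one_pow]; norm_num)]
    refine Finset.sum_congr rfl fun i hi => ?_
    simp only [Finset.mem_filter, Finset.mem_Icc] at hi
    rw [LD_pow (by rw [constantCoeff_one_add_X_pow i hi.1.1]; norm_num)]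
    rw [map_natCast (PowerSeries.C (R := ℚ)) (m i)]
  have hB : LD Q = ∑ i ∈ (Finset.Icc 1 N).filter (fun i => Even i),
      (PowerSeries.C (m i : ℚ)) * LD (1 - X ^ i) := by
    rw [hQ, Bprod, LD_prod _ _ (fun i hi => by
      simp only [Finset.mem_filter, Finset.mem_Icc] at hi
      rw [map_pow, constantCoeff_one_sub_X_pow i hi.1.1, one_pow]; norm_num)]
    refine Finset.sum_congr rfl fun i hi => ?_
    simp only [Finset.mem_filter, Finset.mem_Icc] at hi
    rw [LD_pow (by rw [constantCoeff_one_sub_X_pow i hi.1.1]; norm_num)]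
    rw [map_natCast (PowerSeries.C (R := ℚ)) (m i)]
  have hPsplit : LD P = LD G + LD (Aprod m N) := by
    rw [hP]
    exact LD_mul (by rw [hG, constantCoeff_Gser r q hq]; norm_num)
      (by rw [constantCoeff_Aprod]; norm_num)
  -- coefficient of LD G
  have hLDG : PowerSeries.coeff (N - 1) (LD G)
      = -(q : ℚ) * (if q ∣ N then luc (r : ℚ) (N / q) else 0) := by
    rw [hG, LD_Gser r q hq, neg_mul, map_neg, PowerSeries.coeff_C_mul]
    simp only [Sig, PowerSeries.coeff_mk]
    rw [show N - 1 + 1 = N by omega, neg_mul]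
  -- the numeric identity
  have key : -(q : ℚ) * (if q ∣ N then luc (r : ℚ) (N / q) else 0)
      + ∑ i ∈ (Finset.Icc 1 N).filter (fun i => Odd i),
          (m i : ℚ) * (if i ∣ N then (i : ℚ) * (-1) ^ (N / i + 1) else 0)
      = ∑ i ∈ (Finset.Icc 1 N).filter (fun i => Even i),
          (m i : ℚ) * (if i ∣ N then -(i : ℚ) else 0) := by
    have this0 := h7
    rw [hPsplit, hA, hB, map_add, map_sum, map_sum] at this0
    have eo : ∑ i ∈ (Finset.Icc 1 N).filter (fun i => Odd i),
        PowerSeries.coeff (N - 1) ((PowerSeries.C (m i : ℚ)) * LD (1 + X ^ i))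
        = ∑ i ∈ (Finset.Icc 1 N).filter (fun i => Odd i),
          (m i : ℚ) * (if i ∣ N then (i : ℚ) * (-1) ^ (N / i + 1) else 0) := by
      refine Finset.sum_congr rfl fun i hi => ?_
      simp only [Finset.mem_filter, Finset.mem_Icc] at hi
      rw [PowerSeries.coeff_C_mul, coeff_LD_one_add i N hi.1.1 hN]
    have ee : ∑ i ∈ (Finset.Icc 1 N).filter (fun i => Even i),
        PowerSeries.coeff (N - 1) ((PowerSeries.C (m i : ℚ)) * LD (1 - X ^ i))
        = ∑ i ∈ (Finset.Icc 1 N).filter (fun i => Even i),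
          (m i : ℚ) * (if i ∣ N then -(i : ℚ) else 0) := by
      refine Finset.sum_congr rfl fun i hi => ?_
      simp only [Finset.mem_filter, Finset.mem_Icc] at hi
      rw [PowerSeries.coeff_C_mul, coeff_LD_one_sub i N hi.1.1 hN]
    rw [eo, ee, hLDG] at this0
    exact this0
  -- convert to divisor sums
  set f : ℕ → ℚ := fun i =>
    if i ∣ N then (if Odd i then (-1 : ℚ) ^ (N / i + 1) else 1) * i * (m i) else 0 with hf
  have hodd : ∑ i ∈ (Finset.Icc 1 N).filter (fun i => Odd i),
      (m i : ℚ) * (if i ∣ N then (i : ℚ) * (-1) ^ (N / i + 1) else 0)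
      = ∑ i ∈ (Finset.Icc 1 N).filter (fun i => Odd i), f i := by
    refine Finset.sum_congr rfl fun i hi => ?_
    simp only [Finset.mem_filter] at hi
    simp only [hf, if_pos hi.2]
    split_ifs with h <;> ring
  have heven : ∑ i ∈ (Finset.Icc 1 N).filter (fun i => Even i),
      (m i : ℚ) * (if i ∣ N then -(i : ℚ) else 0)
      = -∑ i ∈ (Finset.Icc 1 N).filter (fun i => Even i), f i := by
    rw [← Finset.sum_neg_distrib]
    refine Finset.sum_congr rfl fun i hi => ?_
    simp only [Finset.mem_filter] at hi
    have hodd' : ¬ Odd i := Nat.not_odd_iff_even.mpr hi.2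
    simp only [hf, if_neg hodd']
    split_ifs with h <;> ring
  have hfilternot : (Finset.Icc 1 N).filter (fun i => Even i)
      = (Finset.Icc 1 N).filter (fun i => ¬ Odd i) := by
    refine Finset.filter_congr fun i _ => ?_
    simp [Nat.not_odd_iff_even]
  have hsum : ∑ i ∈ (Finset.Icc 1 N).filter (fun i => Odd i), f i
      + ∑ i ∈ (Finset.Icc 1 N).filter (fun i => Even i), f i
      = ∑ i ∈ Finset.Icc 1 N, f i := by
    rw [hfilternot]
    exact Finset.sum_filter_add_sum_filter_not _ _ _
  have hdiv : ∑ i ∈ Finset.Icc 1 N, f i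
      = ∑ i ∈ N.divisors, (if Odd i then (-1 : ℚ) ^ (N / i + 1) else 1) * i * (m i) := by
    simp only [hf]
    rw [← Finset.sum_filter]
    refine Finset.sum_congr ?_ fun i _ => rfl
    ext x
    simp only [Finset.mem_filter, Finset.mem_Icc, Nat.mem_divisors]
    constructor
    · rintro ⟨⟨h1, h2⟩, h3⟩; exact ⟨h3, by omega⟩
    · rintro ⟨h1, h2⟩
      exact ⟨⟨Nat.pos_of_dvd_of_pos h1 (by omega), Nat.le_of_dvd (by omega) h1⟩, h1⟩
  -- conclude
  have final : ∑ i ∈ N.divisors, (if Odd i then (-1 : ℚ) ^ (N / i + 1) else 1) * i * (m i)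
      = (q : ℚ) * (if q ∣ N then luc (r : ℚ) (N / q) else 0) := by
    rw [← hdiv, ← hsum]
    have := key
    rw [hodd, heven] at this
    linarith
  rw [final]
  split_ifs with h
  · rfl
  · ring
def eps (q j a : ℕ) : ℚ := if Odd (a * q) then (-1 : ℚ) ^ (j / a + 1) else 1

theorem eps_abs (q j a : ℕ) : |eps q j a| = 1 := by
  rw [eps]
  split_ifs with h
  · rw [abs_pow, abs_neg, abs_one, one_pow]
  · exact abs_one

theorem m_vanish (r q : ℕ) (hq : 1 ≤ q) (m : ℕ → ℕ)
    (H : ∀ d : ℕ, PowerSeries.coeff d (Gser r q * Aprod m d)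
        = PowerSeries.coeff d (Bprod m d)) :
    ∀ d : ℕ, 1 ≤ d → ¬ q ∣ d → m d = 0 := by
  intro d
  induction d using Nat.strong_induction_on with
  | _ d ih =>
    intro hd hnd
    have hmast := master r q hq m H d hd
    rw [if_neg hnd] at hmast
    rw [← Nat.insert_self_properDivisors (by omega : d ≠ 0),
      Finset.sum_insert Nat.self_notMem_properDivisors] at hmast
    have hzero : ∑ i ∈ d.properDivisors, (if Odd i then (-1 : ℚ) ^ (d / i + 1) else 1) * i * (m i)
        = 0 := by
      refine Finset.sum_eq_zero fun i hi => ?_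
      obtain ⟨hdvd, hlt⟩ := Nat.mem_properDivisors.mp hi
      have hi1 : 1 ≤ i := Nat.pos_of_dvd_of_pos hdvd (by omega)
      have : ¬ q ∣ i := fun h => hnd (dvd_trans h hdvd)
      rw [ih i hlt hi1 this]
      push_cast
      ring
    rw [hzero, add_zero] at hmast
    have hd1 : d / d = 1 := Nat.div_self (by omega)
    rw [hd1] at hmast
    have : ((-1 : ℚ)) ^ (1 + 1) = 1 := by norm_num
    rw [this] at hmast
    have hmd : (d : ℚ) * (m d) = 0 := by
      split_ifs at hmast with h
      · linarith
      · linarith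
    have := mul_eq_zero.mp hmd
    rcases this with h | h
    · exfalso; exact (by omega : d ≠ 0) (by exact_mod_cast h)
    · exact_mod_cast h

theorem diamond (r q : ℕ) (hq : 1 ≤ q) (m : ℕ → ℕ)
    (H : ∀ d : ℕ, PowerSeries.coeff d (Gser r q * Aprod m d)
        = PowerSeries.coeff d (Bprod m d))
    (j : ℕ) (hj : 1 ≤ j) :
    ∑ a ∈ j.properDivisors, eps q j a * a * m (a * q) + (j : ℚ) * m (j * q)
      = luc (r : ℚ) j := by
  have hjq : 1 ≤ j * q := Nat.mul_pos (by omega) (by omega)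
  have hmast := master r q hq m H (j * q) hjq
  rw [if_pos (Dvd.intro_left j rfl), Nat.mul_div_cancel _ (by omega : 0 < q)] at hmast
  rw [← Finset.sum_filter_add_sum_filter_not ((j * q).divisors) (fun i => q ∣ i)] at hmast
  have hz : ∑ i ∈ ((j * q).divisors).filter (fun i => ¬ q ∣ i),
      (if Odd i then (-1 : ℚ) ^ ((j * q) / i + 1) else 1) * i * (m i) = 0 := by
    refine Finset.sum_eq_zero fun i hi => ?_
    simp only [Finset.mem_filter, Nat.mem_divisors] at hi
    have hi1 : 1 ≤ i := Nat.pos_of_dvd_of_pos hi.1.1 (by omega)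
    rw [m_vanish r q hq m H i hi1 hi.2]
    push_cast
    ring
  rw [hz, add_zero] at hmast
  have hreindex : ∑ i ∈ ((j * q).divisors).filter (fun i => q ∣ i),
      (if Odd i then (-1 : ℚ) ^ ((j * q) / i + 1) else 1) * i * (m i)
      = ∑ a ∈ j.divisors, (q : ℚ) * (eps q j a * a * m (a * q)) := by
    refine Finset.sum_bij' (fun i _ => i / q) (fun a _ => a * q) ?_ ?_ ?_ ?_ ?_
    · intro i hi
      simp only [Finset.mem_filter, Nat.mem_divisors] at hi
      obtain ⟨⟨hdvd, hne⟩, hqd⟩ := hi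
      obtain ⟨c, rfl⟩ := hqd
      rw [Nat.mul_div_cancel_left _ (by omega : 0 < q)]
      rw [Nat.mem_divisors]
      constructor
      · have := hdvd
        obtain ⟨e, he⟩ := this
        refine ⟨e, ?_⟩
        have : q * c * e = q * (c * e) := by ring
        have h2 : j * q = q * (c * e) := by rw [he]; ring
        have h3 : q * j = q * (c * e) := by rw [Nat.mul_comm q j]; exact h2
        exact Nat.eq_of_mul_eq_mul_left (by omega) h3
      · omega
    · intro a ha
      simp only [Nat.mem_divisors] at ha
      simp only [Finset.mem_filter, Nat.mem_divisors]
      exact ⟨⟨mul_dvd_mul ha.1 dvd_rfl, Nat.mul_ne_zero (by omega) (by omega)⟩, Dvd.intro_left a rfl⟩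
    · intro i hi
      simp only [Finset.mem_filter, Nat.mem_divisors] at hi
      obtain ⟨c, rfl⟩ := hi.2
      rw [Nat.mul_div_cancel_left _ (by omega : 0 < q)]
      ring
    · intro a ha
      rw [Nat.mul_div_cancel _ (by omega : 0 < q)]
    · intro i hi
      simp only [Finset.mem_filter, Nat.mem_divisors] at hi
      obtain ⟨c, rfl⟩ := hi.2
      rw [Nat.mul_div_cancel_left _ (by omega : 0 < q), mul_comm q c]
      have hdivdiv : (j * q) / (c * q) = j / c :=
        Nat.mul_div_mul_right _ _ (by omega : 0 < q)
      rw [hdivdiv, eps]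
      push_cast
      split_ifs with h
      · ring
      · ring
  rw [hreindex, ← Finset.mul_sum] at hmast
  have hcancel : ∑ a ∈ j.divisors, eps q j a * a * m (a * q) = luc (r : ℚ) j := by
    have hq0 : (q : ℚ) ≠ 0 := by exact_mod_cast (by omega : q ≠ 0)
    exact mul_left_cancel₀ hq0 hmast
  rw [← Nat.insert_self_properDivisors (by omega : j ≠ 0),
    Finset.sum_insert Nat.self_notMem_properDivisors] at hcancel
  have hepsj : eps q j j * j * m (j * q) = (j : ℚ) * m (j * q) := by
    rw [eps, Nat.div_self (by omega : 0 < j)]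
    split_ifs with h
    · norm_num
    · norm_num
  rw [hepsj] at hcancel
  rw [add_comm] at hcancel
  exact hcancel
def Pj (q : ℕ) : ℕ → Polynomial ℚ
  | j => Polynomial.C (1 / (j : ℚ)) * (luc (Polynomial.X : Polynomial ℚ) j
      - ∑ a ∈ j.properDivisors.attach,
          Polynomial.C (eps q j a.1 * a.1) * Pj q a.1)
  decreasing_by exact (Nat.mem_properDivisors.mp a.2).2

theorem Pj_def (q j : ℕ) : Pj q j = Polynomial.C (1 / (j : ℚ)) *
    (luc (Polynomial.X : Polynomial ℚ) j
      - ∑ a ∈ j.properDivisors.attach, Polynomial.C (eps q j a.1 * a.1) * Pj q a.1) := by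
  rw [Pj]

theorem Pj_eval (r q : ℕ) (hq : 1 ≤ q) (m : ℕ → ℕ)
    (H : ∀ d : ℕ, PowerSeries.coeff d (Gser r q * Aprod m d)
        = PowerSeries.coeff d (Bprod m d)) :
    ∀ j : ℕ, 1 ≤ j → (Pj q j).eval (r : ℚ) = (m (j * q) : ℚ) := by
  intro j
  induction j using Nat.strong_induction_on with
  | _ j ih =>
    intro hj
    have hd := diamond r q hq m H j hj
    rw [Pj_def, Polynomial.eval_mul, Polynomial.eval_C, Polynomial.eval_sub,
      Polynomial.eval_finset_sum]
    have hluc : (luc (Polynomial.X : Polynomial ℚ) j).eval (r : ℚ) = luc (r : ℚ) j := by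
      have := luc_map (Polynomial.evalRingHom (r : ℚ)) (Polynomial.X : Polynomial ℚ) j
      simpa using this
    have hsum : ∑ a ∈ j.properDivisors.attach,
        (Polynomial.C (eps q j a.1 * a.1) * Pj q a.1).eval (r : ℚ)
        = ∑ a ∈ j.properDivisors, eps q j a * a * (m (a * q) : ℚ) := by
      rw [← Finset.sum_attach j.properDivisors (fun a => eps q j a * a * (m (a * q) : ℚ))]
      refine Finset.sum_congr rfl fun a _ => ?_
      obtain ⟨hdvd, hlt⟩ := Nat.mem_properDivisors.mp a.2
      have ha1 : 1 ≤ a.1 := Nat.pos_of_dvd_of_pos hdvd (by omega)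
      rw [Polynomial.eval_mul, Polynomial.eval_C, ih a.1 hlt ha1]
    rw [hluc, hsum]
    have hj0 : (j : ℚ) ≠ 0 := by exact_mod_cast (by omega : j ≠ 0)
    field_simp
    linarith [hd]

theorem Pj_degree (q : ℕ) : ∀ j : ℕ, 1 ≤ j →
    (Pj q j).natDegree = j ∧ (Pj q j).leadingCoeff = 1 / (j : ℚ) := by
  intro j
  induction j using Nat.strong_induction_on with
  | _ j ih =>
    intro hj
    obtain ⟨hmon, hdeg⟩ := luc_poly_monic j hj
    have hsumdeg : (∑ a ∈ j.properDivisors.attach,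
        Polynomial.C (eps q j a.1 * a.1) * Pj q a.1).degree < (j : WithBot ℕ) := by
      refine lt_of_le_of_lt (Polynomial.degree_sum_le _ _) ?_
      rw [Finset.sup_lt_iff (by exact_mod_cast WithBot.bot_lt_coe j)]
      intro a _
      obtain ⟨hdvd, hlt⟩ := Nat.mem_properDivisors.mp a.2
      have ha1 : 1 ≤ a.1 := Nat.pos_of_dvd_of_pos hdvd (by omega)
      calc (Polynomial.C (eps q j a.1 * a.1) * Pj q a.1).degree
          ≤ ((Polynomial.C (eps q j a.1 * a.1) * Pj q a.1).natDegree : WithBot ℕ) :=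
            Polynomial.degree_le_natDegree
        _ ≤ ((Pj q a.1).natDegree : WithBot ℕ) := by
            exact_mod_cast Polynomial.natDegree_C_mul_le _ _
        _ < (j : WithBot ℕ) := by
            rw [(ih a.1 hlt ha1).1]
            exact_mod_cast hlt
    have hdlt : (∑ a ∈ j.properDivisors.attach,
        Polynomial.C (eps q j a.1 * a.1) * Pj q a.1).degree
        < (luc (Polynomial.X : Polynomial ℚ) j).degree := by
      rw [Polynomial.degree_eq_natDegree hmon.ne_zero, hdeg]
      exact hsumdeg
    have hmon2 : (luc (Polynomial.X : Polynomial ℚ) j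
        - ∑ a ∈ j.properDivisors.attach, Polynomial.C (eps q j a.1 * a.1) * Pj q a.1).Monic :=
      hmon.sub_of_left hdlt
    have hdeg2 : (luc (Polynomial.X : Polynomial ℚ) j
        - ∑ a ∈ j.properDivisors.attach, Polynomial.C (eps q j a.1 * a.1) * Pj q a.1).natDegree
        = j := by
      rw [Polynomial.natDegree_eq_of_degree_eq (Polynomial.degree_sub_eq_left_of_degree_lt hdlt),
        hdeg]
    have hc0 : (1 / (j : ℚ)) ≠ 0 := by
      have : (j : ℚ) ≠ 0 := by exact_mod_cast (by omega : j ≠ 0)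
      simpa using this
    constructor
    · rw [Pj_def, Polynomial.natDegree_C_mul hc0, hdeg2]
    · rw [Pj_def, Polynomial.leadingCoeff_mul, Polynomial.leadingCoeff_C, hmon2.leadingCoeff,
        mul_one]
def alph (r : ℕ) : ℝ := ((r : ℝ) + Real.sqrt ((r : ℝ) ^ 2 - 4)) / 2

def beth (r : ℕ) : ℝ := ((r : ℝ) - Real.sqrt ((r : ℝ) ^ 2 - 4)) / 2

section RealBounds
variable {r : ℕ} (hr : 3 ≤ r)
include hr

theorem rr3 : (3 : ℝ) ≤ (r : ℝ) := by exact_mod_cast hr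

theorem disc_nonneg : (0 : ℝ) ≤ (r : ℝ) ^ 2 - 4 := by
  nlinarith [rr3 hr]

theorem sqrt_sq' : Real.sqrt ((r : ℝ) ^ 2 - 4) ^ 2 = (r : ℝ) ^ 2 - 4 :=
  Real.sq_sqrt (disc_nonneg hr)

theorem ab_sum : alph r + beth r = (r : ℝ) := by rw [alph, beth]; ring

theorem ab_prod : alph r * beth r = 1 := by
  rw [alph, beth]
  have := sqrt_sq' hr
  nlinarith [this]

theorem alph_two_le : 2 ≤ alph r := by
  rw [alph]
  have h1 : (1 : ℝ) ≤ Real.sqrt ((r : ℝ) ^ 2 - 4) := by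
    rw [show (1:ℝ) = Real.sqrt 1 by rw [Real.sqrt_one]]
    refine Real.sqrt_le_sqrt ?_
    nlinarith [rr3 hr]
  have := rr3 hr
  linarith

theorem beth_pos : 0 < beth r := by
  rw [beth]
  have h1 : Real.sqrt ((r : ℝ) ^ 2 - 4) < (r : ℝ) := by
    refine Real.sqrt_lt' (by linarith [rr3 hr]) |>.mpr ?_
    nlinarith [rr3 hr]
  linarith

theorem beth_le_one : beth r ≤ 1 := by
  have hp := ab_prod hr
  have h2 := alph_two_le hr
  have hb := beth_pos hr
  nlinarith

theorem rle : (r : ℝ) ≤ 2 * alph r := by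
  rw [alph]
  have := Real.sqrt_nonneg ((r : ℝ) ^ 2 - 4)
  linarith

theorem luc_cast (j : ℕ) : ((luc (r : ℚ) j : ℚ) : ℝ) = luc ((r : ℕ) : ℝ) j := by
  have h := luc_map (Rat.castHom ℝ) ((r : ℕ) : ℚ) j
  simpa using h

theorem luc_lb (j : ℕ) : alph r ^ j ≤ ((luc (r : ℚ) j : ℚ) : ℝ) := by
  rw [luc_cast hr, luc_eq_roots (ab_sum hr) (ab_prod hr)]
  have := pow_pos (beth_pos hr) j
  linarith

theorem luc_ub (j : ℕ) : ((luc (r : ℚ) j : ℚ) : ℝ) ≤ 2 * alph r ^ j := by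
  rw [luc_cast hr, luc_eq_roots (ab_sum hr) (ab_prod hr)]
  have hb : beth r ^ j ≤ alph r ^ j := by
    refine pow_le_pow_left₀ (le_of_lt (beth_pos hr)) ?_ j
    linarith [beth_le_one hr, alph_two_le hr]
  linarith

theorem geom_bound : ∀ k : ℕ, ∑ a ∈ Finset.Icc 1 k, alph r ^ a ≤ 2 * alph r ^ k := by
  intro k
  induction k with
  | zero => simp
  | succ k ih =>
    rw [Finset.sum_Icc_succ_top (by omega : 1 ≤ k + 1)]
    have h2 := alph_two_le hr
    have hp : (0:ℝ) < alph r ^ k := pow_pos (by linarith) k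
    have : 2 * alph r ^ k ≤ alph r ^ (k + 1) := by
      rw [pow_succ]
      nlinarith
    rw [pow_succ]
    nlinarith

theorem sum_half_bound : ∀ j : ℕ, 1 ≤ j →
    2 * ∑ a ∈ Finset.Icc 1 (j / 2), alph r ^ a ≤ alph r ^ j := by
  intro j hj
  have h2 := alph_two_le hr
  have h1 : (1:ℝ) ≤ alph r := by linarith
  rcases Nat.lt_or_ge j 2 with hj2 | hj2
  · have : j = 1 := by omega
    subst this
    simp
    linarith
  rcases Nat.lt_or_ge j 3 with hj3 | hj3
  · have : j = 2 := by omega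
    subst this
    simp
    nlinarith
  · have hge := geom_bound hr (j / 2)
    have hstep : 4 * alph r ^ (j / 2) ≤ alph r ^ j := by
      have he : j / 2 + 2 ≤ j := by omega
      have hp : (0:ℝ) < alph r ^ (j / 2) := pow_pos (by linarith) _
      have h4 : (4:ℝ) ≤ alph r ^ 2 := by nlinarith
      calc 4 * alph r ^ (j / 2) ≤ alph r ^ 2 * alph r ^ (j / 2) :=
          mul_le_mul_of_nonneg_right h4 hp.le
        _ = alph r ^ (j / 2 + 2) := by rw [pow_add]; ring
        _ ≤ alph r ^ j := pow_le_pow_right₀ h1 he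
    linarith

end RealBounds
theorem pd_mem_le {a j : ℕ} (hj : 1 ≤ j) (ha : a ∈ j.properDivisors) : 1 ≤ a ∧ 2 * a ≤ j := by
  obtain ⟨hdvd, hlt⟩ := Nat.mem_properDivisors.mp ha
  have ha1 : 1 ≤ a := Nat.pos_of_dvd_of_pos hdvd (by omega)
  obtain ⟨k, hk⟩ := hdvd
  have hk2 : 2 ≤ k := by
    rcases Nat.lt_or_ge k 2 with h | h
    · interval_cases k <;> omega
    · exact h
  refine ⟨ha1, ?_⟩
  calc 2 * a = a * 2 := by ring
    _ ≤ a * k := Nat.mul_le_mul_left a hk2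
    _ = j := hk.symm

theorem Sbound (r q : ℕ) (hr : 3 ≤ r) (m : ℕ → ℕ) (j : ℕ) (hj : 1 ≤ j)
    (hU : ∀ a, 1 ≤ a → a < j → (a : ℝ) * m (a * q) ≤ 4 * alph r ^ a) :
    |∑ a ∈ j.properDivisors, ((eps q j a : ℚ) : ℝ) * a * m (a * q)|
      ≤ 4 * ∑ a ∈ Finset.Icc 1 (j / 2), alph r ^ a := by
  have hsub : j.properDivisors ⊆ Finset.Icc 1 (j / 2) := by
    intro a ha
    obtain ⟨h1, h2⟩ := pd_mem_le hj ha
    rw [Finset.mem_Icc]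
    omega
  calc |∑ a ∈ j.properDivisors, ((eps q j a : ℚ) : ℝ) * a * m (a * q)|
      ≤ ∑ a ∈ j.properDivisors, |((eps q j a : ℚ) : ℝ) * a * m (a * q)| :=
        Finset.abs_sum_le_sum_abs _ _
    _ ≤ ∑ a ∈ j.properDivisors, 4 * alph r ^ a := by
        refine Finset.sum_le_sum fun a ha => ?_
        obtain ⟨h1, h2⟩ := pd_mem_le hj ha
        have heps : |((eps q j a : ℚ) : ℝ)| = 1 := by
          rw [← Rat.cast_abs, eps_abs]; norm_num
        rw [abs_mul, abs_mul, heps, one_mul, Nat.abs_cast, Nat.abs_cast]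
        exact hU a h1 (by omega)
    _ ≤ ∑ a ∈ Finset.Icc 1 (j / 2), 4 * alph r ^ a := by
        refine Finset.sum_le_sum_of_subset_of_nonneg hsub fun a _ _ => ?_
        have : (0:ℝ) < alph r := by linarith [alph_two_le hr]
        positivity
    _ = 4 * ∑ a ∈ Finset.Icc 1 (j / 2), alph r ^ a := by rw [Finset.mul_sum]

theorem diamond_real (r q : ℕ) (hq : 1 ≤ q) (m : ℕ → ℕ)
    (H : ∀ d : ℕ, PowerSeries.coeff d (Gser r q * Aprod m d)
        = PowerSeries.coeff d (Bprod m d))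
    (j : ℕ) (hj : 1 ≤ j) :
    ∑ a ∈ j.properDivisors, ((eps q j a : ℚ) : ℝ) * a * m (a * q) + (j : ℝ) * m (j * q)
      = ((luc (r : ℚ) j : ℚ) : ℝ) := by
  have := congrArg (fun x : ℚ => (x : ℝ)) (diamond r q hq m H j hj)
  push_cast at this
  push_cast
  exact this

theorem Ubound (r q : ℕ) (hr : 3 ≤ r) (hq : 1 ≤ q) (m : ℕ → ℕ)
    (H : ∀ d : ℕ, PowerSeries.coeff d (Gser r q * Aprod m d)
        = PowerSeries.coeff d (Bprod m d)) :
    ∀ j : ℕ, 1 ≤ j → (j : ℝ) * m (j * q) ≤ 4 * alph r ^ j := by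
  intro j
  induction j using Nat.strong_induction_on with
  | _ j ih =>
    intro hj
    have hd := diamond_real r q hq m H j hj
    have hS := Sbound r q hr m j hj (fun a h1 h2 => ih a h2 h1)
    have hhalf := sum_half_bound hr j hj
    have hub := luc_ub hr (r := r) j
    have habs := abs_le.mp hS
    linarith [habs.1, habs.2]

theorem Lbound (r q : ℕ) (hr : 3 ≤ r) (hq : 1 ≤ q) (m : ℕ → ℕ)
    (H : ∀ d : ℕ, PowerSeries.coeff d (Gser r q * Aprod m d)
        = PowerSeries.coeff d (Bprod m d)) :
    ∀ j : ℕ, 7 ≤ j → alph r ^ j / 2 ≤ (j : ℝ) * m (j * q) := by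
  intro j hj
  have hj1 : 1 ≤ j := by omega
  have hd := diamond_real r q hq m H j hj1
  have hS := Sbound r q hr m j hj1 (fun a h1 h2 => Ubound r q hr hq m H a h1)
  have hgeo := geom_bound hr (j / 2)
  have hlb := luc_lb hr (r := r) j
  have h2 := alph_two_le hr
  have h1 : (1:ℝ) ≤ alph r := by linarith
  -- 16 * alph^(j/2) ≤ alph^j
  have hkey : 16 * alph r ^ (j / 2) ≤ alph r ^ j := by
    have hsplit : alph r ^ j = alph r ^ (j - j / 2) * alph r ^ (j / 2) := by
      rw [← pow_add]
      congr 1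
      omega
    have h16 : (16:ℝ) ≤ alph r ^ (j - j / 2) := by
      calc (16:ℝ) = 2 ^ 4 := by norm_num
        _ ≤ alph r ^ 4 := by
            refine pow_le_pow_left₀ (by norm_num) h2 4
        _ ≤ alph r ^ (j - j / 2) := pow_le_pow_right₀ h1 (by omega)
    rw [hsplit]
    have hp : (0:ℝ) < alph r ^ (j / 2) := pow_pos (by linarith) _
    exact mul_le_mul_of_nonneg_right h16 hp.le
  have habs := abs_le.mp hS
  linarith [habs.1, habs.2]
theorem rational_homotopy_ranks_hyperbolic (r n : ℕ) (hr : 3 ≤ r) (hn : 2 ≤ n)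
    (m : ℕ → ℕ)
    (H : ∀ d : ℕ,
      PowerSeries.coeff (R := ℚ) d
        ((1 - PowerSeries.C (R := ℚ) (r : ℚ) * PowerSeries.X ^ (n - 1) +
            PowerSeries.X ^ (2 * n - 2)) *
          ∏ i ∈ (Finset.Icc 1 d).filter (fun i => Odd i),
            (1 + PowerSeries.X ^ i) ^ (m i)) =
      PowerSeries.coeff (R := ℚ) d
        (∏ i ∈ (Finset.Icc 1 d).filter (fun i => Even i),
            (1 - PowerSeries.X ^ i) ^ (m i))) :
    (∀ d : ℕ, 1 ≤ d → ¬ (n - 1) ∣ d → m d = 0) ∧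
    (∃ p : ℕ → Polynomial ℚ, ∀ j : ℕ, 1 ≤ j →
      (p j).eval (r : ℚ) = (m (j * (n - 1)) : ℚ) ∧
      (p j).natDegree = j ∧ (p j).leadingCoeff = 1 / (j : ℚ)) ∧
    Tendsto (fun j : ℕ => ((m (j * (n - 1)) : ℝ)) ^ ((j : ℝ)⁻¹)) atTop
      (nhds (((r : ℝ) + Real.sqrt ((r : ℝ) ^ 2 - 4)) / 2)) ∧
    1 < ((r : ℝ) + Real.sqrt ((r : ℝ) ^ 2 - 4)) / 2 ∧
    (∀ N : ℕ, ∃ d : ℕ, N ≤ d ∧ m d ≠ 0) := by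
  have hq : 1 ≤ n - 1 := by omega
  set q : ℕ := n - 1 with hqdef
  have H' : ∀ d : ℕ, PowerSeries.coeff d (Gser r q * Aprod m d)
      = PowerSeries.coeff d (Bprod m d) := by
    intro d
    have h2q : 2 * q = 2 * n - 2 := by omega
    rw [Gser, Aprod, Bprod, h2q]
    exact H d
  have h2 := alph_two_le hr
  have hαpos : (0:ℝ) < alph r := by linarith
  have halph : ((r : ℝ) + Real.sqrt ((r : ℝ) ^ 2 - 4)) / 2 = alph r := rfl
  refine ⟨m_vanish r q hq m H', ⟨Pj q, fun j hj => ?_⟩, ?_, ?_, ?_⟩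
  · exact ⟨Pj_eval r q hq m H' j hj, (Pj_degree q j hj).1, (Pj_degree q j hj).2⟩
  · -- tendsto
    rw [halph]
    have hinv : Tendsto (fun j : ℕ => ((j : ℝ))⁻¹) atTop (nhds 0) :=
      tendsto_inv_atTop_zero.comp tendsto_natCast_atTop_atTop
    have t4 : Tendsto (fun j : ℕ => (4 : ℝ) ^ ((j : ℝ)⁻¹)) atTop (nhds 1) := by
      have := Filter.Tendsto.rpow (tendsto_const_nhds (x := (4:ℝ)) (f := atTop)) hinv
        (Or.inl (by norm_num))
      simpa using this
    have t2 : Tendsto (fun j : ℕ => (2 : ℝ) ^ ((j : ℝ)⁻¹)) atTop (nhds 1) := by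
      have := Filter.Tendsto.rpow (tendsto_const_nhds (x := (2:ℝ)) (f := atTop)) hinv
        (Or.inl (by norm_num))
      simpa using this
    have tj : Tendsto (fun j : ℕ => ((j : ℝ)) ^ ((j : ℝ)⁻¹)) atTop (nhds 1) := by
      have := tendsto_rpow_div.comp (tendsto_natCast_atTop_atTop (R := ℝ))
      simp only [Function.comp_def, one_div] at this
      exact this
    have hden : Tendsto (fun j : ℕ => ((2 * (j : ℝ))) ^ ((j : ℝ)⁻¹)) atTop (nhds 1) := by
      have hmul := t2.mul tj
      rw [mul_one] at hmul
      refine Tendsto.congr' ?_ hmul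
      filter_upwards [Filter.eventually_atTop.mpr ⟨1, fun j hj => hj⟩] with j hj
      rw [← Real.mul_rpow (by norm_num) (by positivity)]
    have hlo : Tendsto (fun j : ℕ => alph r / ((2 * (j : ℝ))) ^ ((j : ℝ)⁻¹)) atTop
        (nhds (alph r)) := by
      have := Tendsto.div (tendsto_const_nhds (x := alph r) (f := atTop)) hden one_ne_zero
      simpa only [div_one, Pi.div_def] using this
    have hup : Tendsto (fun j : ℕ => (4 : ℝ) ^ ((j : ℝ)⁻¹) * alph r) atTop (nhds (alph r)) := by
      have := t4.mul (tendsto_const_nhds (x := alph r) (f := atTop))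
      simpa using this
    refine tendsto_of_tendsto_of_tendsto_of_le_of_le' hlo hup ?_ ?_
    · -- lower bound eventually
      filter_upwards [Filter.eventually_atTop.mpr ⟨7, fun j hj => hj⟩] with j hj
      have hj1 : (1:ℝ) ≤ (j:ℝ) := by exact_mod_cast (by omega : 1 ≤ j)
      have hjpos : (0:ℝ) < (j:ℝ) := by linarith
      have hL := Lbound r q hr hq m H' j hj
      have hmlb : alph r ^ j / (2 * (j:ℝ)) ≤ (m (j * q) : ℝ) := by
        rw [div_le_iff₀ (by positivity)]
        calc alph r ^ j = (alph r ^ j / 2) * 2 := by ring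
          _ ≤ ((j:ℝ) * m (j * q)) * 2 := by linarith
          _ = (m (j*q) : ℝ) * (2 * (j:ℝ)) := by ring
      have hnn : (0:ℝ) ≤ alph r ^ j / (2 * (j:ℝ)) := by positivity
      have := Real.rpow_le_rpow hnn hmlb (by positivity : (0:ℝ) ≤ (j:ℝ)⁻¹)
      refine le_trans (le_of_eq ?_) this
      rw [Real.div_rpow (by positivity) (by positivity)]
      congr 1
      rw [← Real.rpow_natCast (alph r) j, ← Real.rpow_mul hαpos.le,
        mul_inv_cancel₀ (by positivity : (j:ℝ) ≠ 0), Real.rpow_one]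
    · -- upper bound eventually
      filter_upwards [Filter.eventually_atTop.mpr ⟨7, fun j hj => hj⟩] with j hj
      have hj1 : (1:ℝ) ≤ (j:ℝ) := by exact_mod_cast (by omega : 1 ≤ j)
      have hU := Ubound r q hr hq m H' j (by omega)
      have hmub : (m (j * q) : ℝ) ≤ 4 * alph r ^ j := by
        have hm1 : (m (j*q) : ℝ) ≤ (j:ℝ) * m (j*q) := by
          nlinarith [Nat.cast_nonneg (α := ℝ) (m (j*q))]
        linarith
      have := Real.rpow_le_rpow (by positivity : (0:ℝ) ≤ (m (j*q):ℝ)) hmub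
        (by positivity : (0:ℝ) ≤ (j:ℝ)⁻¹)
      refine le_trans this (le_of_eq ?_)
      rw [Real.mul_rpow (by norm_num) (by positivity)]
      congr 1
      rw [← Real.rpow_natCast (alph r) j, ← Real.rpow_mul hαpos.le,
        mul_inv_cancel₀ (by positivity : (j:ℝ) ≠ 0), Real.rpow_one]
  · rw [halph]; linarith
  · intro N
    refine ⟨(N + 7) * q, ?_, ?_⟩
    · calc N ≤ N + 7 := by omega
        _ ≤ (N + 7) * q := Nat.le_mul_of_pos_right _ (by omega)
    · intro hzero
      have hL := Lbound r q hr hq m H' (N + 7) (by omega)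
      rw [hzero] at hL
      have : (0:ℝ) < alph r ^ (N + 7) := pow_pos hαpos _
      push_cast at hL
      nlinarith
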